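/- Let G be an n-vertex simple graph and let 𝓕 = (F_1, …, F_m) be any finite sequence of simple graphs. Then ∏_{i=1}^m s(F_i, G) = Σ_X c(𝓕, X) · s(X, G), where the sum is over all isomorphism classes X of simple graphs on at most n vertices. -/

import Mathlib

open SimpleGraph

/-- The vertex-deleted subgraph `G − v`: the induced subgraph of `G` obtained by
deleting `v` and all edges incident with `v`. -/
abbrev vdel {n : ℕ} (G : SimpleGraph (Fin n)) (v : Fin n) :
    SimpleGraph ({v}ᶜ : Set (Fin n)) :=
  G.induce {v}ᶜ

/-- `H` is a reconstruction of `G`: there is a bijection `f` between the vertex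
sets such that `G − v ≅ H − f v` for every vertex `v`. -/
def IsReconstruction {n : ℕ} (G H : SimpleGraph (Fin n)) : Prop :=
  ∃ f : Fin n ≃ Fin n, ∀ v : Fin n, Nonempty (vdel G v ≃g vdel H (f v))

/-- `s(F,G)`: the number of subgraphs of `G` isomorphic to `F`. -/
noncomputable def subCount {k n : ℕ} (F : SimpleGraph (Fin k))
    (G : SimpleGraph (Fin n)) : ℕ :=
  Nat.card {H : G.Subgraph // Nonempty (F ≃g H.coe)}

/-- A finite sequence of simple graphs (on arbitrary finite vertex sets). -/
abbrev GSeq : Type := List (Σ k : ℕ, SimpleGraph (Fin k))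

/-- `c(𝓕,G)`: the number of covers of `G` by the sequence `L`, i.e. of sequences
of subgraphs of `G`, the `i`-th being isomorphic to the `i`-th graph of `L`,
whose union (of both vertex sets and edge sets) is all of `G`. -/
noncomputable def coverCount {n : ℕ} (L : GSeq) (G : SimpleGraph (Fin n)) : ℕ :=
  Nat.card {C : Fin L.length → G.Subgraph //
    (∀ i, Nonempty ((L.get i).2 ≃g (C i).coe)) ∧ (⨆ i, C i) = ⊤}



namespace KocayAux

variable {V : Type*} {W : Type*} {A : SimpleGraph V} {B : SimpleGraph W}

/-- The coe of a mapped subgraph along an injective hom is isomorphic to the coe. -/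
noncomputable def mapCoeIso (f : A →g B) (hf : Function.Injective f) (H : A.Subgraph) :
    H.coe ≃g (H.map f).coe where
  toEquiv := Equiv.Set.image f H.verts hf
  map_rel_iff' := by
    rintro ⟨a, ha⟩ ⟨b, hb⟩
    simp only [Equiv.Set.image_apply, Subgraph.coe_adj, Subgraph.map_adj, Relation.Map]
    constructor
    · rintro ⟨u, v, h, hu, hv⟩
      cases hf hu
      cases hf hv
      exact h
    · intro h
      refine ⟨a, b, h, ?_, ?_⟩ <;> rfl

lemma comp_symm_toHom (e : A ≃g B) : e.symm.toHom.comp e.toHom = Hom.id := by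
  ext x
  simp

lemma comp_toHom_symm (e : A ≃g B) : e.toHom.comp e.symm.toHom = Hom.id := by
  ext x
  simp

lemma map_le_map_iff (e : A ≃g B) {H H' : A.Subgraph} :
    H.map e.toHom ≤ H'.map e.toHom ↔ H ≤ H' := by
  constructor
  · intro h
    have h2 := Subgraph.map_mono (f := e.symm.toHom) h
    rwa [← Subgraph.map_comp, ← Subgraph.map_comp, comp_symm_toHom, Subgraph.map_id,
      Subgraph.map_id] at h2
  · exact fun h => Subgraph.map_mono h

/-- A graph isomorphism induces an order isomorphism of subgraph lattices. -/
def subgraphOrderIso (e : A ≃g B) : A.Subgraph ≃o B.Subgraph where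
  toFun := Subgraph.map e.toHom
  invFun := Subgraph.map e.symm.toHom
  left_inv H := by rw [← Subgraph.map_comp, comp_symm_toHom, Subgraph.map_id]
  right_inv H := by rw [← Subgraph.map_comp, comp_toHom_symm, Subgraph.map_id]
  map_rel_iff' := map_le_map_iff e

lemma map_iSup {ι : Sort*} (f : A →g B) (H : ι → A.Subgraph) :
    (⨆ i, H i).map f = ⨆ i, (H i).map f := by
  ext x y
  · simp [Subgraph.verts_iSup, Set.image_iUnion]
  · simp only [Subgraph.map_adj, Subgraph.iSup_adj, Relation.Map]
    tauto

lemma map_top_iso (e : A ≃g B) : (⊤ : A.Subgraph).map e.toHom = ⊤ := by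
  ext x y
  · simp [Set.image_univ, e.surjective.range_eq]
  · simp only [Subgraph.map_adj, Relation.Map, Subgraph.top_adj]
    constructor
    · rintro ⟨u, v, h, rfl, rfl⟩
      exact e.map_adj_iff.mpr h
    · intro h
      exact ⟨e.symm x, e.symm y, e.symm.map_adj_iff.mpr h, e.apply_symm_apply x,
        e.apply_symm_apply y⟩

lemma map_eq_top_iff (e : A ≃g B) {H : A.Subgraph} :
    H.map e.toHom = ⊤ ↔ H = ⊤ := by
  constructor
  · intro h
    have := (subgraphOrderIso e).injective (a₁ := H) (a₂ := ⊤)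
    exact this (by simpa [subgraphOrderIso, map_top_iso e] using h)
  · rintro rfl
    exact map_top_iso e

end KocayAux


namespace KocayAux

variable {V : Type*} {W : Type*} {A : SimpleGraph V} {B : SimpleGraph W}

lemma coeSubgraph_top {G : SimpleGraph V} (U : G.Subgraph) :
    Subgraph.coeSubgraph (⊤ : U.coe.Subgraph) = U := by
  ext x y
  · simp
  · rw [Subgraph.coeSubgraph_adj]
    simp only [Subgraph.top_adj, Subgraph.coe_adj]
    constructor
    · rintro ⟨hv, hw, h⟩
      exact h
    · intro h
      exact ⟨U.edge_vert h, U.edge_vert h.symm, h⟩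

/-- `coverCount` for graphs on arbitrary vertex types. -/
noncomputable def coverCount' (L : GSeq) (A : SimpleGraph V) : ℕ :=
  Nat.card {C : Fin L.length → A.Subgraph //
    (∀ i, Nonempty ((L.get i).2 ≃g (C i).coe)) ∧ (⨆ i, C i) = ⊤}

lemma coverCount'_iso (L : GSeq) (e : A ≃g B) : coverCount' L A = coverCount' L B := by
  apply Nat.card_congr
  refine Equiv.subtypeEquiv (Equiv.arrowCongr (Equiv.refl _) (subgraphOrderIso e).toEquiv) ?_
  intro C
  constructor
  · rintro ⟨h1, h2⟩
    refine ⟨fun i => (h1 i).map (fun iso => iso.trans (mapCoeIso e.toHom e.injective (C i))), ?_⟩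
    show (⨆ i, (C i).map e.toHom) = ⊤
    rw [← map_iSup, h2, map_top_iso]
  · rintro ⟨h1, h2⟩
    refine ⟨fun i => (h1 i).map
      (fun iso => iso.trans (mapCoeIso e.toHom e.injective (C i)).symm), ?_⟩
    have h2' : (⨆ i, (C i).map e.toHom) = ⊤ := h2
    rwa [← map_iSup, map_eq_top_iff] at h2'

/-- Equal subgraphs have isomorphic coercions. -/
def coeIsoOfEq {G : SimpleGraph V} {S T : G.Subgraph} (h : S = T) : S.coe ≃g T.coe := by
  subst h
  exact RelIso.refl _

lemma fiber_card (L : GSeq) {G : SimpleGraph V} (U : G.Subgraph) :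
    Nat.card {C : Fin L.length → G.Subgraph //
      (∀ i, Nonempty ((L.get i).2 ≃g (C i).coe)) ∧ (⨆ i, C i) = U}
    = coverCount' L U.coe := by
  apply Nat.card_congr
  apply Equiv.symm
  have hinj : Function.Injective ⇑U.hom := Subtype.val_injective
  refine ⟨fun C' => ⟨fun i => Subgraph.coeSubgraph (C'.1 i), ?_⟩,
    fun C => ⟨fun i => U.restrict (C.1 i), ?_⟩, ?_, ?_⟩
  · obtain ⟨h1, h2⟩ := C'.2
    refine ⟨fun i => (h1 i).map (fun iso => iso.trans (mapCoeIso U.hom hinj (C'.1 i))), ?_⟩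
    show (⨆ i, Subgraph.map U.hom (C'.1 i)) = U
    rw [← map_iSup, h2]
    exact coeSubgraph_top U
  · obtain ⟨h1, h2⟩ := C.2
    have hle : ∀ i, C.1 i ≤ U := fun i => le_trans (le_iSup C.1 i) h2.le
    have hcs : ∀ i, Subgraph.coeSubgraph (U.restrict (C.1 i)) = C.1 i := fun i => by
      rw [Subgraph.coeSubgraph_restrict_eq]
      exact inf_eq_right.mpr (hle i)
    refine ⟨fun i => (h1 i).map (fun iso => iso.trans
      ((mapCoeIso U.hom hinj (U.restrict (C.1 i))).trans (coeIsoOfEq (hcs i))).symm), ?_⟩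
    apply Subgraph.coeSubgraph_injective U
    show Subgraph.map U.hom _ = Subgraph.map U.hom ⊤
    rw [map_iSup]
    have h3 : (⨆ i, Subgraph.map U.hom (U.restrict (C.1 i))) = U := by
      rw [iSup_congr hcs]
      exact h2
    rw [h3]
    exact (coeSubgraph_top U).symm
  · intro C'
    apply Subtype.ext
    funext i
    exact Subgraph.restrict_coeSubgraph (C'.1 i)
  · intro C
    apply Subtype.ext
    funext i
    obtain ⟨h1, h2⟩ := C.2
    have hle : C.1 i ≤ U := le_trans (le_iSup C.1 i) h2.le
    show Subgraph.coeSubgraph (U.restrict (C.1 i)) = C.1 i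
    rw [Subgraph.coeSubgraph_restrict_eq]
    exact inf_eq_right.mpr hle

instance {V : Type*} [Finite V] {G : SimpleGraph V} : Finite G.Subgraph :=
  Finite.of_injective (fun H => (H.verts, H.Adj))
    (fun H1 H2 h => Subgraph.ext (congrArg Prod.fst h) (congrArg Prod.snd h))

lemma natCard_sigma {ι : Type*} [Fintype ι] (f : ι → Type*) [∀ i, Finite (f i)] :
    Nat.card (Σ i, f i) = ∑ i, Nat.card (f i) := by
  letI := fun i => Fintype.ofFinite (f i)
  simp [Nat.card_eq_fintype_card]

end KocayAux

open KocayAux in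
theorem stmt_2' {n : ℕ} (G : SimpleGraph (Fin n)) (L : GSeq)
    (R : Finset (Σ k : ℕ, SimpleGraph (Fin k)))
    (hRle : ∀ Y ∈ R, Y.1 ≤ n)
    (hR : ∀ X : Σ k : ℕ, SimpleGraph (Fin k), X.1 ≤ n →
      ∃! Y, Y ∈ R ∧ Nonempty (X.2 ≃g Y.2)) :
    (L.map fun F => Nat.card {H : G.Subgraph // Nonempty (F.2 ≃g H.coe)}).prod =
      ∑ X ∈ R, coverCount' L X.2 * Nat.card {H : G.Subgraph // Nonempty (X.2 ≃g H.coe)} := by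
  classical
  -- representative machinery
  have key : ∀ U : G.Subgraph, ∃ Y, (Y ∈ R ∧ Nonempty (U.coe ≃g Y.2)) ∧
      ∀ Y', Y' ∈ R → Nonempty (U.coe ≃g Y'.2) → Y' = Y := by
    intro U
    haveI : Fintype U.verts := Fintype.ofFinite _
    have hk : Fintype.card U.verts ≤ n := by
      have := Fintype.card_le_of_injective (fun x : U.verts => (x : Fin n)) Subtype.val_injective
      simpa using this
    set e : U.verts ≃ Fin (Fintype.card U.verts) := Fintype.equivFin _ with he
    obtain ⟨Y, ⟨hYR, ⟨i⟩⟩, huniq⟩ :=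
      hR ⟨Fintype.card U.verts, U.coe.comap e.symm.toEmbedding⟩ hk
    have iso0 : U.coe.comap e.symm.toEmbedding ≃g U.coe := Iso.comap e.symm U.coe
    exact ⟨Y, ⟨hYR, ⟨iso0.symm.trans i⟩⟩,
      fun Y' h1 h2 => huniq Y' ⟨h1, h2.map fun j => iso0.trans j⟩⟩
  choose rep hrep huniq using key
  haveI : Fintype G.Subgraph := Fintype.ofFinite _
  -- step 1 : list product to Fin product
  have h1 : (L.map fun F => Nat.card {H : G.Subgraph // Nonempty (F.2 ≃g H.coe)}).prod
      = ∏ i : Fin L.length, Nat.card {H : G.Subgraph // Nonempty ((L.get i).2 ≃g H.coe)} := by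
    conv_lhs => rw [← List.ofFn_get L, List.map_ofFn]
    rw [List.prod_ofFn]
    rfl
  -- step 2 : product of cards to card of tuples
  have h2 : ∏ i : Fin L.length, Nat.card {H : G.Subgraph // Nonempty ((L.get i).2 ≃g H.coe)}
      = Nat.card {C : Fin L.length → G.Subgraph //
          ∀ i, Nonempty ((L.get i).2 ≃g (C i).coe)} := by
    rw [← Nat.card_pi]
    exact Nat.card_congr ((Equiv.subtypePiEquivPi
      (β := fun _ : Fin L.length => G.Subgraph)
      (p := fun i H => Nonempty ((L.get i).2 ≃g H.coe))).symm)
  -- step 3 : fiber decomposition over the union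
  have h3 : Nat.card {C : Fin L.length → G.Subgraph //
          ∀ i, Nonempty ((L.get i).2 ≃g (C i).coe)}
      = ∑ U : G.Subgraph, Nat.card {C : Fin L.length → G.Subgraph //
          (∀ i, Nonempty ((L.get i).2 ≃g (C i).coe)) ∧ (⨆ i, C i) = U} := by
    rw [← natCard_sigma]
    apply Nat.card_congr
    exact (Equiv.sigmaFiberEquiv
        (fun C : {C : Fin L.length → G.Subgraph //
          ∀ i, Nonempty ((L.get i).2 ≃g (C i).coe)} => ⨆ i, C.1 i)).symm.trans
      (Equiv.sigmaCongrRight fun U => Equiv.subtypeSubtypeEquivSubtypeInter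
        (fun C : Fin L.length → G.Subgraph => ∀ i, Nonempty ((L.get i).2 ≃g (C i).coe))
        (fun C => (⨆ i, C i) = U))
  -- step 4 : each fiber is a cover count
  have h4 : ∀ U : G.Subgraph, Nat.card {C : Fin L.length → G.Subgraph //
          (∀ i, Nonempty ((L.get i).2 ≃g (C i).coe)) ∧ (⨆ i, C i) = U}
      = coverCount' L (rep U).2 := fun U =>
    (fiber_card L U).trans (coverCount'_iso L (hrep U).2.some)
  -- step 5 : group by representative
  have h5 : ∑ U : G.Subgraph, coverCount' L (rep U).2
      = ∑ X ∈ R, coverCount' L X.2 * Nat.card {H : G.Subgraph // Nonempty (X.2 ≃g H.coe)} := by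
    rw [← Finset.sum_fiberwise_of_maps_to (g := rep) (t := R)
      (fun U _ => (hrep U).1) (fun U => coverCount' L (rep U).2)]
    refine Finset.sum_congr rfl fun X hX => ?_
    have hfilter : ∀ U ∈ Finset.univ.filter (fun U : G.Subgraph => rep U = X),
        coverCount' L (rep U).2 = coverCount' L X.2 := by
      intro U hU
      rw [(Finset.mem_filter.mp hU).2]
    rw [Finset.sum_congr rfl hfilter, Finset.sum_const, smul_eq_mul, mul_comm]
    congr 1
    have hiff : ∀ U : G.Subgraph, rep U = X ↔ Nonempty (X.2 ≃g U.coe) := by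
      intro U
      constructor
      · rintro rfl
        exact ((hrep U).2).map fun j => j.symm
      · rintro ⟨j⟩
        exact (huniq U X hX ⟨j.symm⟩).symm
    rw [Nat.card_eq_fintype_card, Fintype.card_subtype]
    congr 1
    exact Finset.filter_congr fun U _ => hiff U
  rw [h1, h2, h3, Finset.sum_congr rfl (fun U _ => h4 U), h5]


/-- The counting identity underlying Kocay's lemma: for any `n`-vertex graph `G`
and any finite sequence `L = (F_1, …, F_m)` of graphs,
`∏ i, s(F_i, G) = Σ_X c(L, X) · s(X, G)`, where the sum ranges over all
isomorphism classes of graphs on at most `n` vertices (represented by a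
transversal `R` containing exactly one representative of each such class). -/
theorem stmt_2 {n : ℕ} (G : SimpleGraph (Fin n)) (L : GSeq)
    (R : Finset (Σ k : ℕ, SimpleGraph (Fin k)))
    (hRle : ∀ Y ∈ R, Y.1 ≤ n)
    (hR : ∀ X : Σ k : ℕ, SimpleGraph (Fin k), X.1 ≤ n →
      ∃! Y, Y ∈ R ∧ Nonempty (X.2 ≃g Y.2)) :
    (L.map fun F => subCount F.2 G).prod =
      ∑ X ∈ R, coverCount L X.2 * subCount X.2 G := by
  exact stmt_2' G L R hRle hR
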